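/- Let l be a prime, n ≥ 1, and P ∈ ℤ[x] a monic polynomial of degree n. Then the n×n matrices over the l-adic integers ℤ_l whose characteristic polynomial equals the image of P in ℤ_l[x] and whose minimal polynomial over ℚ_l is squarefree fall into only finitely many conjugacy classes under GL_n(ℤ_l); that is, there is a finite set S of such matrices so that every such matrix equals U · C · U⁻¹ for some C ∈ S and U ∈ GL_n(ℤ_l). -/

import Mathlib

open Polynomial Matrix Finset
variable {l : ℕ} [Fact l.Prime] {n : ℕ}

lemma exists_pow_coeff_bound (p : Polynomial ℚ_[l]) :
    ∃ t : ℕ, ∀ k, ‖p.coeff k‖ ≤ (l : ℝ) ^ t := by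
  have hl1 : (1 : ℝ) < l := by
    exact_mod_cast (Fact.out : l.Prime).one_lt
  have : ∀ s : Finset ℕ, ∃ t : ℕ, ∀ k ∈ s, ‖p.coeff k‖ ≤ (l : ℝ) ^ t := by
    intro s
    induction s using Finset.induction with
    | empty => exact ⟨0, by simp⟩
    | @insert a s _ ih =>
      obtain ⟨t, ht⟩ := ih
      obtain ⟨t', ht'⟩ := pow_unbounded_of_one_lt ‖p.coeff a‖ hl1
      refine ⟨max t t', fun k hk => ?_⟩
      rcases Finset.mem_insert.mp hk with rfl | hk
      · exact ht'.le.trans (pow_le_pow_right₀ hl1.le (le_max_right _ _))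
      · exact (ht k hk).trans (pow_le_pow_right₀ hl1.le (le_max_left _ _))
  obtain ⟨t, ht⟩ := this (range (p.natDegree + 1))
  refine ⟨t, fun k => ?_⟩
  by_cases hk : k ∈ range (p.natDegree + 1)
  · exact ht k hk
  · rw [coeff_eq_zero_of_natDegree_lt (by simpa using hk)]
    simp

/-- entrywise norm bound -/
def MBnd (C : ℝ) (X : Matrix (Fin n) (Fin n) ℚ_[l]) : Prop := ∀ i j, ‖X i j‖ ≤ C

namespace MBnd

lemma mono {C C' : ℝ} {X : Matrix (Fin n) (Fin n) ℚ_[l]} (h : MBnd C X) (hle : C ≤ C') :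
    MBnd C' X := fun i j => (h i j).trans hle

lemma add {C : ℝ} {X Y : Matrix (Fin n) (Fin n) ℚ_[l]} (hX : MBnd C X) (hY : MBnd C Y) :
    MBnd C (X + Y) := by
  intro i j
  have := IsUltrametricDist.norm_add_le_max (X i j) (Y i j)
  simpa using this.trans (max_le (hX i j) (hY i j))

lemma sub {C : ℝ} {X Y : Matrix (Fin n) (Fin n) ℚ_[l]} (hX : MBnd C X) (hY : MBnd C Y) :
    MBnd C (X - Y) := by
  have : MBnd C (-Y) := fun i j => by simpa using hY i j
  simpa [sub_eq_add_neg] using hX.add this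

lemma sum {C : ℝ} (hC : 0 ≤ C) {ι : Type*} {s : Finset ι}
    {f : ι → Matrix (Fin n) (Fin n) ℚ_[l]} (h : ∀ k ∈ s, MBnd C (f k)) :
    MBnd C (∑ k ∈ s, f k) := by
  intro i j
  rw [Matrix.sum_apply]
  exact IsUltrametricDist.norm_sum_le_of_forall_le_of_nonneg hC (fun k hk => h k hk i j)

lemma mul {C D : ℝ} (hC : 0 ≤ C) {X Y : Matrix (Fin n) (Fin n) ℚ_[l]}
    (hX : MBnd C X) (hY : MBnd D Y) : MBnd (C * D) (X * Y) := by
  intro i j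
  rw [Matrix.mul_apply]
  have hCD : 0 ≤ C * D := mul_nonneg hC ((norm_nonneg (Y i j)).trans (hY i j))
  refine IsUltrametricDist.norm_sum_le_of_forall_le_of_nonneg hCD (fun k _ => ?_)
  rw [norm_mul]
  exact mul_le_mul (hX i k) (hY k j) (norm_nonneg _) hC

lemma smul {C : ℝ} {c : ℚ_[l]} {X : Matrix (Fin n) (Fin n) ℚ_[l]} (hX : MBnd C X) :
    MBnd (‖c‖ * C) (c • X) := by
  intro i j
  rw [Matrix.smul_apply, smul_eq_mul, norm_mul]
  exact mul_le_mul_of_nonneg_left (hX i j) (norm_nonneg c)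

lemma one : MBnd 1 (1 : Matrix (Fin n) (Fin n) ℚ_[l]) := by
  intro i j
  rw [Matrix.one_apply]
  split <;> simp

lemma intMat (A : Matrix (Fin n) (Fin n) ℤ_[l]) :
    MBnd 1 (A.map (fun x : ℤ_[l] => (x : ℚ_[l]))) := by
  intro i j
  exact PadicInt.norm_le_one (A i j)

lemma pow {X : Matrix (Fin n) (Fin n) ℚ_[l]} (hX : MBnd 1 X) (k : ℕ) : MBnd 1 (X ^ k) := by
  induction k with
  | zero => simpa using MBnd.one
  | succ k ih => rw [pow_succ]; simpa using ih.mul zero_le_one hX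

end MBnd

lemma telescope_pow_mul (A B : Matrix (Fin n) (Fin n) ℚ_[l]) (k : ℕ) :
    A * (∑ i ∈ range k, A ^ i * B ^ (k - 1 - i)) -
      (∑ i ∈ range k, A ^ i * B ^ (k - 1 - i)) * B = A ^ k - B ^ k := by
  rw [Finset.mul_sum, Finset.sum_mul, ← Finset.sum_sub_distrib]
  have : ∀ i ∈ range k,
      A * (A ^ i * B ^ (k - 1 - i)) - A ^ i * B ^ (k - 1 - i) * B
        = (fun i => A ^ i * B ^ (k - i)) (i + 1) - (fun i => A ^ i * B ^ (k - i)) i := by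
    intro i hi
    simp only [Finset.mem_range] at hi
    have h1 : k - 1 - i = k - (i + 1) := by omega
    have h2 : k - i = (k - 1 - i) + 1 := by omega
    simp only [h1]
    rw [← mul_assoc, ← pow_succ' A i]
    congr 1
    rw [h2, pow_succ, h1, mul_assoc]
  rw [Finset.sum_congr rfl this, Finset.sum_range_sub (fun i => A ^ i * B ^ (k - i))]
  simp

lemma aeval_comm (A : Matrix (Fin n) (Fin n) ℚ_[l]) (b : Polynomial ℚ_[l]) :
    A * aeval A b = aeval A b * A := by
  rw [aeval_eq_sum_range, Finset.mul_sum, Finset.sum_mul]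
  refine Finset.sum_congr rfl fun k _ => ?_
  rw [mul_smul_comm, smul_mul_assoc, ← pow_succ, ← pow_succ']

lemma DA_eq_aeval_derivative (A : Matrix (Fin n) (Fin n) ℚ_[l]) (q : Polynomial ℚ_[l]) :
    (∑ k ∈ range (q.natDegree + 1), q.coeff k •
        ∑ i ∈ range k, A ^ i * A ^ (k - 1 - i)) = aeval A (derivative q) := by
  have hdeg : (derivative q).natDegree < q.natDegree + 1 :=
    lt_of_le_of_lt (q.natDegree_derivative_le) (by omega)
  rw [aeval_eq_sum_range' hdeg]
  have hinner : ∀ k, (∑ i ∈ range k, A ^ i * A ^ (k - 1 - i)) = k • A ^ (k - 1) := by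
    intro k
    have : ∀ i ∈ range k, A ^ i * A ^ (k - 1 - i) = A ^ (k - 1) := by
      intro i hi
      simp only [Finset.mem_range] at hi
      rw [← pow_add]
      congr 1
      omega
    rw [Finset.sum_congr rfl this, Finset.sum_const, Finset.card_range]
  simp only [hinner]
  rw [Finset.sum_range_succ' (fun k => q.coeff k • (k • A ^ (k - 1)))]
  rw [Finset.sum_range_succ (fun i => (derivative q).coeff i • A ^ i)]
  have hlast : (derivative q).coeff q.natDegree • A ^ q.natDegree = 0 := by
    rw [coeff_derivative, coeff_eq_zero_of_natDegree_lt (by omega)]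
    simp
  rw [hlast, add_zero]
  simp only [zero_smul, smul_zero, add_zero]
  refine Finset.sum_congr rfl fun i _ => ?_
  rw [coeff_derivative]
  have : ((i : ℚ_[l]) + 1) = ((i + 1 : ℕ) : ℚ_[l]) := by push_cast; ring
  rw [this, mul_smul, Nat.cast_smul_eq_nsmul]
  simp

lemma conj_of_congr (q a b : Polynomial ℚ_[l]) (hab : a * q + b * derivative q = 1) :
    ∃ N : ℕ, ∀ A B : Matrix (Fin n) (Fin n) ℤ_[l],
      aeval (A.map (fun x : ℤ_[l] => (x : ℚ_[l]))) q = 0 →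
      aeval (B.map (fun x : ℤ_[l] => (x : ℚ_[l]))) q = 0 →
      (∀ i j, ‖B i j - A i j‖ ≤ (l : ℝ) ^ (-(N : ℤ))) →
      ∃ U : (Matrix (Fin n) (Fin n) ℤ_[l])ˣ,
        A = (U : Matrix (Fin n) (Fin n) ℤ_[l]) * B *
          ((U⁻¹ : (Matrix (Fin n) (Fin n) ℤ_[l])ˣ) : Matrix (Fin n) (Fin n) ℤ_[l]) := by
  have hlpos : (0 : ℝ) < l := by exact_mod_cast (Fact.out : l.Prime).pos
  have hl1 : (1 : ℝ) < l := by exact_mod_cast (Fact.out : l.Prime).one_lt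
  obtain ⟨t₁, ht₁⟩ := exists_pow_coeff_bound (l := l) b
  obtain ⟨t₂, ht₂⟩ := exists_pow_coeff_bound (l := l) q
  set t := max t₁ t₂ with htdef
  have htb : ∀ k, ‖b.coeff k‖ ≤ (l : ℝ) ^ t :=
    fun k => (ht₁ k).trans (pow_le_pow_right₀ hl1.le (le_max_left _ _))
  have htq : ∀ k, ‖q.coeff k‖ ≤ (l : ℝ) ^ t :=
    fun k => (ht₂ k).trans (pow_le_pow_right₀ hl1.le (le_max_right _ _))
  refine ⟨2 * t + 1, fun A B hqA hqB hcong => ?_⟩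
  set ε : ℝ := (l : ℝ) ^ (-(2 * t + 1 : ℕ) : ℤ) with hεdef
  have hεpos : 0 < ε := zpow_pos hlpos _
  set A' := A.map (fun x : ℤ_[l] => (x : ℚ_[l])) with hA'def
  set B' := B.map (fun x : ℤ_[l] => (x : ℚ_[l])) with hB'def
  have hBndA : MBnd 1 A' := MBnd.intMat A
  have hBndB : MBnd 1 B' := MBnd.intMat B
  -- difference bound
  have hdiff : MBnd ε (B' - A') := by
    intro i j
    have : (B' - A') i j = ((B i j - A i j : ℤ_[l]) : ℚ_[l]) := by
      simp [hA'def, hB'def, Matrix.sub_apply, Matrix.map_apply]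
    rw [this]
    have := hcong i j
    rwa [PadicInt.norm_def] at this
  have hpowdiff : ∀ k : ℕ, MBnd ε (B' ^ k - A' ^ k) := by
    intro k
    induction k with
    | zero => intro i j; simpa using hεpos.le
    | succ k ih =>
      have heq : B' ^ (k + 1) - A' ^ (k + 1)
          = B' ^ k * (B' - A') + (B' ^ k - A' ^ k) * A' := by
        rw [pow_succ, pow_succ, mul_sub, sub_mul]; abel
      rw [heq]
      have h1 : MBnd ε (B' ^ k * (B' - A')) := by
        simpa using (hBndB.pow k).mul zero_le_one hdiff
      have h2 : MBnd ε ((B' ^ k - A' ^ k) * A') := by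
        simpa using (ih.mul hεpos.le hBndA : MBnd (ε * 1) _)
      exact h1.add h2
  set d := q.natDegree with hddef
  set D : Matrix (Fin n) (Fin n) ℚ_[l] :=
    ∑ k ∈ range (d + 1), q.coeff k • ∑ i ∈ range k, A' ^ i * B' ^ (k - 1 - i) with hDdef
  set DA : Matrix (Fin n) (Fin n) ℚ_[l] :=
    ∑ k ∈ range (d + 1), q.coeff k • ∑ i ∈ range k, A' ^ i * A' ^ (k - 1 - i) with hDAdef
  -- Claim A : A' * D = D * B'
  have claimA : A' * D = D * B' := by
    have expand : A' * D - D * B' = ∑ k ∈ range (d + 1), q.coeff k • (A' ^ k - B' ^ k) := by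
      rw [hDdef, Finset.mul_sum, Finset.sum_mul, ← Finset.sum_sub_distrib]
      refine Finset.sum_congr rfl fun k _ => ?_
      rw [mul_smul_comm, smul_mul_assoc, ← smul_sub, telescope_pow_mul]
    have : A' * D - D * B' = aeval A' q - aeval B' q := by
      rw [expand, aeval_eq_sum_range, aeval_eq_sum_range, ← Finset.sum_sub_distrib]
      exact Finset.sum_congr rfl fun k _ => (smul_sub _ _ _)
    rw [hqA, hqB, sub_zero] at this
    exact sub_eq_zero.mp this
  -- Claim C : aeval A' b * DA = 1
  have claimC : aeval A' b * DA = 1 := by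
    rw [hDAdef, hddef, DA_eq_aeval_derivative A' q]
    have := congrArg (aeval A') hab
    rw [_root_.map_add, _root_.map_mul, _root_.map_mul, _root_.map_one, hqA, mul_zero, zero_add] at this
    exact this
  set U' : Matrix (Fin n) (Fin n) ℚ_[l] := aeval A' b * D with hU'def
  -- relation
  have hrel' : A' * U' = U' * B' := by
    rw [hU'def, ← mul_assoc, aeval_comm, mul_assoc, claimA, mul_assoc]
  -- norm bound on U' - 1
  have hBndb : MBnd ((l : ℝ) ^ t) (aeval A' b) := by
    rw [aeval_eq_sum_range]
    refine MBnd.sum (by positivity) fun k _ => ?_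
    have := (hBndA.pow k).smul (c := b.coeff k)
    rw [mul_one] at this
    exact this.mono (htb k)
  have hBndDdiff : MBnd ((l : ℝ) ^ t * ε) (D - DA) := by
    have heq : D - DA = ∑ k ∈ range (d + 1), q.coeff k •
        ∑ i ∈ range k, A' ^ i * (B' ^ (k - 1 - i) - A' ^ (k - 1 - i)) := by
      rw [hDdef, hDAdef, ← Finset.sum_sub_distrib]
      refine Finset.sum_congr rfl fun k _ => ?_
      rw [← smul_sub, ← Finset.sum_sub_distrib]
      congr 1
      exact Finset.sum_congr rfl fun i _ => (mul_sub _ _ _).symm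
    rw [heq]
    refine MBnd.sum (by positivity) fun k _ => ?_
    have hin : MBnd ε (∑ i ∈ range k, A' ^ i * (B' ^ (k - 1 - i) - A' ^ (k - 1 - i))) := by
      refine MBnd.sum hεpos.le fun i _ => ?_
      simpa using (hBndA.pow i).mul zero_le_one (hpowdiff (k - 1 - i))
    have := hin.smul (c := q.coeff k)
    exact this.mono (mul_le_mul_of_nonneg_right (htq k) hεpos.le)
  have hU'1 : MBnd ((l : ℝ) ^ (-1 : ℤ)) (U' - 1) := by
    have heq : U' - 1 = aeval A' b * (D - DA) := by
      rw [mul_sub, ← hU'def, claimC]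
    rw [heq]
    have := hBndb.mul (by positivity) hBndDdiff
    refine this.mono (le_of_eq ?_)
    rw [hεdef]
    rw [← zpow_natCast (l : ℝ) t, ← zpow_add₀ (ne_of_gt hlpos), ← zpow_add₀ (ne_of_gt hlpos)]
    congr 1
    push_cast
    ring
  have hεle1 : (l : ℝ) ^ (-1 : ℤ) < 1 := by
    rw [_root_.zpow_neg_one]
    exact inv_lt_one_of_one_lt₀ hl1
  -- entries of U' are integral
  have hU'int : ∀ i j, ‖U' i j‖ ≤ 1 := by
    intro i j
    have : U' i j = (U' - 1) i j + (1 : Matrix (Fin n) (Fin n) ℚ_[l]) i j := by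
      simp [Matrix.sub_apply]
    rw [this]
    refine (IsUltrametricDist.norm_add_le_max _ _).trans (max_le ?_ ?_)
    · exact (hU'1 i j).trans hεle1.le
    · exact MBnd.one i j
  set Uz : Matrix (Fin n) (Fin n) ℤ_[l] := Matrix.of (fun i j => (⟨U' i j, hU'int i j⟩ : ℤ_[l]))
    with hUzdef
  have hUzmap : Uz.map (fun x : ℤ_[l] => (x : ℚ_[l])) = U' := by
    ext i j
    rfl
  -- relation over ℤ_l
  have hrelz : A * Uz = Uz * B := by
    have hmapinj : Function.Injective
        (fun M : Matrix (Fin n) (Fin n) ℤ_[l] => M.map (fun x : ℤ_[l] => (x : ℚ_[l]))) := by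
      intro M N h
      ext i j
      have := congrFun (congrFun h i) j
      exact Subtype.coe_injective this
    apply hmapinj
    show (A * Uz).map _ = (Uz * B).map _
    have hmm : ∀ (M N : Matrix (Fin n) (Fin n) ℤ_[l]),
        (M * N).map (fun x : ℤ_[l] => (x : ℚ_[l]))
          = M.map (fun x : ℤ_[l] => (x : ℚ_[l])) * N.map (fun x : ℤ_[l] => (x : ℚ_[l])) := by
      intro M N
      exact Matrix.map_mul (f := PadicInt.Coe.ringHom)
    rw [hmm, hmm, hUzmap, ← hA'def, ← hB'def, hrel']
  -- Uz is a unit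
  haveI : Fact (1 < l) := ⟨(Fact.out : l.Prime).one_lt⟩
  have hUzred : Uz.map (PadicInt.toZMod : ℤ_[l] → ZMod l) = 1 := by
    ext i j
    have hnormlt : ‖Uz i j - (1 : Matrix (Fin n) (Fin n) ℤ_[l]) i j‖ < 1 := by
      have hcoe : ((Uz i j - (1 : Matrix (Fin n) (Fin n) ℤ_[l]) i j : ℤ_[l]) : ℚ_[l])
          = (U' - 1) i j := by
        push_cast
        have h1 : ((((1 : Matrix (Fin n) (Fin n) ℤ_[l]) i j : ℤ_[l])) : ℚ_[l])
            = (1 : Matrix (Fin n) (Fin n) ℚ_[l]) i j := by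
          by_cases hij : i = j <;> simp [hij, Matrix.one_apply]
        have h0 : ((Uz i j : ℤ_[l]) : ℚ_[l]) = U' i j := rfl
        rw [h0, h1, Matrix.sub_apply]
      rw [PadicInt.norm_def, hcoe]
      exact lt_of_le_of_lt (hU'1 i j) hεle1
    have hker : (Uz i j - (1 : Matrix (Fin n) (Fin n) ℤ_[l]) i j) ∈
        RingHom.ker (PadicInt.toZMod : ℤ_[l] →+* ZMod l) := by
      rw [PadicInt.ker_toZMod, IsLocalRing.mem_maximalIdeal, mem_nonunits_iff,
        PadicInt.isUnit_iff]
      exact ne_of_lt hnormlt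
    have := RingHom.mem_ker.mp hker
    rw [map_sub, sub_eq_zero] at this
    rw [Matrix.map_apply, this]
    by_cases hij : i = j <;> simp [hij, Matrix.one_apply]
  have hdet : IsUnit Uz.det := by
    by_contra hnot
    have hmem : Uz.det ∈ IsLocalRing.maximalIdeal ℤ_[l] := by
      rw [IsLocalRing.mem_maximalIdeal]
      exact hnot
    rw [← PadicInt.ker_toZMod, RingHom.mem_ker] at hmem
    have : (PadicInt.toZMod : ℤ_[l] →+* ZMod l) Uz.det = 1 := by
      rw [RingHom.map_det]
      show (Uz.map (PadicInt.toZMod : ℤ_[l] → ZMod l)).det = 1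
      rw [hUzred, Matrix.det_one]
    rw [hmem] at this
    exact one_ne_zero this.symm
  have hUnit : IsUnit Uz := (Matrix.isUnit_iff_isUnit_det Uz).mpr hdet
  refine ⟨hUnit.unit, ?_⟩
  have hspec : (hUnit.unit : Matrix (Fin n) (Fin n) ℤ_[l]) = Uz := hUnit.unit_spec
  calc A = A * (hUnit.unit : Matrix (Fin n) (Fin n) ℤ_[l])
      * ((hUnit.unit⁻¹ : _ˣ) : Matrix (Fin n) (Fin n) ℤ_[l]) := by
        rw [Units.mul_inv_cancel_right]
    _ = _ := by rw [hspec, hrelz]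



/-- **Finitely many `GL_n(ℤ_l)`-conjugacy classes of semisimple matrices with a fixed
characteristic polynomial.** Let `l` be a prime, `n ≥ 1`, and `P ∈ ℤ[x]` monic of degree `n`.
The `n × n` matrices over `ℤ_l` with characteristic polynomial the image of `P` and squarefree
minimal polynomial over `ℚ_l` fall into finitely many `GL_n(ℤ_l)`-conjugacy classes. -/
theorem finitely_many_Zl_conjugacy_classes (l : ℕ) [Fact l.Prime] (n : ℕ) (hn : 1 ≤ n)
    (P : Polynomial ℤ) (hP : P.Monic) (hdeg : P.natDegree = n) :
    ∃ S : Finset (Matrix (Fin n) (Fin n) ℤ_[l]),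
      (∀ C ∈ S, C.charpoly = P.map (Int.castRingHom ℤ_[l]) ∧
        Squarefree (minpoly ℚ_[l] (C.map (fun x : ℤ_[l] => (x : ℚ_[l]))))) ∧
      ∀ A : Matrix (Fin n) (Fin n) ℤ_[l],
        A.charpoly = P.map (Int.castRingHom ℤ_[l]) →
        Squarefree (minpoly ℚ_[l] (A.map (fun x : ℤ_[l] => (x : ℚ_[l])))) →
        ∃ C ∈ S, ∃ U : GL (Fin n) ℤ_[l],
          A = (U : Matrix (Fin n) (Fin n) ℤ_[l]) * C * ((U⁻¹ : GL (Fin n) ℤ_[l]) :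
            Matrix (Fin n) (Fin n) ℤ_[l]) := by
  classical
  set P' : Polynomial ℚ_[l] := P.map (Int.castRingHom ℚ_[l]) with hP'def
  have hP'ne : P' ≠ 0 := (hP.map _).ne_zero
  obtain ⟨q, e, hq_sf, hq_dvd, hpow⟩ := exists_squarefree_dvd_pow_of_ne_zero hP'ne
  have hsep : q.Separable := PerfectField.separable_iff_squarefree.mpr hq_sf
  obtain ⟨a, b, hab⟩ := hsep
  obtain ⟨N, hN⟩ := conj_of_congr (n := n) q a b hab
  set cond : Matrix (Fin n) (Fin n) ℤ_[l] → Prop := fun A =>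
    A.charpoly = P.map (Int.castRingHom ℤ_[l]) ∧
      Squarefree (minpoly ℚ_[l] (A.map (fun x : ℤ_[l] => (x : ℚ_[l])))) with hconddef
  have hkey : ∀ A : Matrix (Fin n) (Fin n) ℤ_[l], cond A →
      aeval (A.map (fun x : ℤ_[l] => (x : ℚ_[l]))) q = 0 := by
    intro A hA
    set A' := A.map (fun x : ℤ_[l] => (x : ℚ_[l])) with hA'
    have hchar : A'.charpoly = P' := by
      have h0 : A' = A.map (PadicInt.Coe.ringHom : ℤ_[l] →+* ℚ_[l]) := rfl
      rw [h0, Matrix.charpoly_map, hA.1, Polynomial.map_map, hP'def]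
      congr 1
    have hmdvd : minpoly ℚ_[l] A' ∣ q ^ (e + 1) := by
      have h1 : minpoly ℚ_[l] A' ∣ A'.charpoly :=
        minpoly.dvd _ _ (Matrix.aeval_self_charpoly A')
      have h2 : P' ∣ q ^ (e + 1) := by
        rw [pow_succ]
        exact hpow.trans (dvd_mul_right _ _)
      exact h1.trans (hchar ▸ h2)
    have hm : minpoly ℚ_[l] A' ∣ q :=
      (hA.2.dvd_pow_iff_dvd (Nat.succ_ne_zero e)).mp hmdvd
    obtain ⟨r, hr⟩ := hm
    rw [hr, _root_.map_mul, minpoly.aeval, zero_mul]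
  haveI : NeZero (l ^ N) := ⟨pow_ne_zero _ (Fact.out : l.Prime).ne_zero⟩
  set red : Matrix (Fin n) (Fin n) ℤ_[l] → Matrix (Fin n) (Fin n) (ZMod (l ^ N)) :=
    fun A => A.map (PadicInt.toZModPow N) with hreddef
  set T : Finset (Matrix (Fin n) (Fin n) (ZMod (l ^ N))) :=
    Finset.univ.filter (fun r => ∃ A, cond A ∧ red A = r) with hTdef
  set f : Matrix (Fin n) (Fin n) (ZMod (l ^ N)) → Matrix (Fin n) (Fin n) ℤ_[l] :=
    fun r => if h : ∃ A, cond A ∧ red A = r then h.choose else 0 with hfdef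
  refine ⟨T.image f, ?_, ?_⟩
  · intro C hC
    obtain ⟨r, hr, rfl⟩ := Finset.mem_image.mp hC
    have hex : ∃ A, cond A ∧ red A = r := (Finset.mem_filter.mp hr).2
    have : f r = hex.choose := by rw [hfdef]; exact dif_pos hex
    rw [this]
    exact hex.choose_spec.1
  · intro A hA1 hA2
    have hcondA : cond A := ⟨hA1, hA2⟩
    have hex : ∃ A', cond A' ∧ red A' = red A := ⟨A, hcondA, rfl⟩
    set C := f (red A) with hCdef
    have hC : cond C ∧ red C = red A := by
      have : f (red A) = hex.choose := by rw [hfdef]; exact dif_pos hex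
      rw [hCdef, this]
      exact hex.choose_spec
    have hCmem : C ∈ T.image f :=
      Finset.mem_image.mpr ⟨red A, Finset.mem_filter.mpr ⟨Finset.mem_univ _, hex⟩, rfl⟩
    have hcong : ∀ i j, ‖C i j - A i j‖ ≤ (l : ℝ) ^ (-(N : ℤ)) := by
      intro i j
      have hmem : C i j - A i j ∈ (Ideal.span {(l : ℤ_[l]) ^ N} : Ideal ℤ_[l]) := by
        rw [← PadicInt.ker_toZModPow, RingHom.mem_ker, map_sub]
        have hentry : red C i j = red A i j := by rw [hC.2]
        have hCe : (PadicInt.toZModPow N) (C i j) = red C i j := rfl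
        have hAe : (PadicInt.toZModPow N) (A i j) = red A i j := rfl
        rw [hCe, hAe, hentry, sub_self]
      exact (PadicInt.norm_le_pow_iff_mem_span_pow _ N).mpr hmem
    obtain ⟨U, hU⟩ := hN A C (hkey A hcondA) (hkey C hC.1) hcong
    exact ⟨C, hCmem, U, hU⟩
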